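/- Let $g \geq 4$ be an integer and let $k_1,\dots,k_{2g+1}$ be nonnegative integers with at least two of them nonzero. Set $s_1 = \sum_i k_i$, $s_2 = \sum_{i<j} k_i k_j$, $a_2 = \tfrac{1}{2}g(g+1) + g s_1 + s_2$, $v_3 = \tfrac{1}{2}\left(\tfrac{g(g+1)(2g+1)}{3} + g(2g+1)s_1 + g s_1^2 + 2g s_2 + s_1 s_2 + s_3\right)$ where $s_3 = \sum_{i<j<\ell} k_i k_j k_\ell$, and $V = g - \tfrac{3}{2} + \tfrac{1}{2}\sum_{m=0}^{2g} 2^m(2g+1-m)s_m$ where $s_m$ is the $m$-th elementary symmetric polynomial in the $k_i$. Then $v_3 \cdot (V + 2g - 1) > 7 a_2^2$. -/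

import Mathlib

/-- The `m`-th elementary symmetric polynomial in the variables `x 0, …, x (N-1)`. -/
def esymm (N m : ℕ) (x : ℕ → ℚ) : ℚ :=
  ∑ t ∈ (Finset.range N).powersetCard m, ∏ j ∈ t, x j

lemma esymm_nonneg (N m : ℕ) (x : ℕ → ℚ) (hx : ∀ i, 0 ≤ x i) : 0 ≤ esymm N m x :=
  Finset.sum_nonneg fun t _ => Finset.prod_nonneg fun j _ => hx j

lemma pretzel_core (gq s1 s2 : ℚ) (hG : 0 ≤ gq - 4) (hX : 0 ≤ s1 - 2) (hY : 0 ≤ s2 - 1) :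
    7 * ((1 / 2) * gq * (gq + 1) + gq * s1 + s2) ^ 2
      < ((1 / 2) * (gq * (gq + 1) * (2 * gq + 1) / 3 + gq * (2 * gq + 1) * s1
          + gq * s1 ^ 2 + 2 * gq * s2))
        * (4 * gq - 2 + 2 * gq * s1 + (4 * gq - 2) * s2)
      + ((1 / 2) * (s1 * s2)) * (4 * gq - 2 + 2 * gq * s1 + (4 * gq - 2) * s2) := by
  linarith [(pow_nonneg hY 1),
    (pow_nonneg hY 2),
    (pow_nonneg hX 1),
    (mul_nonneg (pow_nonneg hX 1) (pow_nonneg hY 1)),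
    (mul_nonneg (pow_nonneg hX 1) (pow_nonneg hY 2)),
    (pow_nonneg hX 2),
    (mul_nonneg (pow_nonneg hX 2) (pow_nonneg hY 1)),
    (pow_nonneg hX 3),
    (pow_nonneg hG 1),
    (mul_nonneg (pow_nonneg hG 1) (pow_nonneg hY 1)),
    (mul_nonneg (pow_nonneg hG 1) (pow_nonneg hY 2)),
    (mul_nonneg (pow_nonneg hG 1) (pow_nonneg hX 1)),
    (mul_nonneg (mul_nonneg (pow_nonneg hG 1) (pow_nonneg hX 1)) (pow_nonneg hY 1)),
    (mul_nonneg (mul_nonneg (pow_nonneg hG 1) (pow_nonneg hX 1)) (pow_nonneg hY 2)),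
    (mul_nonneg (pow_nonneg hG 1) (pow_nonneg hX 2)),
    (mul_nonneg (mul_nonneg (pow_nonneg hG 1) (pow_nonneg hX 2)) (pow_nonneg hY 1)),
    (mul_nonneg (pow_nonneg hG 1) (pow_nonneg hX 3)),
    (pow_nonneg hG 2),
    (mul_nonneg (pow_nonneg hG 2) (pow_nonneg hY 1)),
    (mul_nonneg (pow_nonneg hG 2) (pow_nonneg hY 2)),
    (mul_nonneg (pow_nonneg hG 2) (pow_nonneg hX 1)),
    (mul_nonneg (mul_nonneg (pow_nonneg hG 2) (pow_nonneg hX 1)) (pow_nonneg hY 1)),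
    (mul_nonneg (pow_nonneg hG 2) (pow_nonneg hX 2)),
    (mul_nonneg (mul_nonneg (pow_nonneg hG 2) (pow_nonneg hX 2)) (pow_nonneg hY 1)),
    (mul_nonneg (pow_nonneg hG 2) (pow_nonneg hX 3)),
    (pow_nonneg hG 3),
    (mul_nonneg (pow_nonneg hG 3) (pow_nonneg hY 1)),
    (mul_nonneg (pow_nonneg hG 3) (pow_nonneg hX 1)),
    (mul_nonneg (mul_nonneg (pow_nonneg hG 3) (pow_nonneg hX 1)) (pow_nonneg hY 1)),
    (mul_nonneg (pow_nonneg hG 3) (pow_nonneg hX 2)),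
    (pow_nonneg hG 4),
    (mul_nonneg (pow_nonneg hG 4) (pow_nonneg hY 1)),
    (mul_nonneg (pow_nonneg hG 4) (pow_nonneg hX 1))]

/-- For `g ≥ 4` and nonnegative integers `k_1,…,k_{2g+1}` with at least two nonzero,
`v₃ (V + 2g - 1) > 7 a₂²`. -/
theorem pretzel_inequality (g : ℕ) (hg : 4 ≤ g) (k : ℕ → ℕ)
    (htwo : ∃ i j, i < 2 * g + 1 ∧ j < 2 * g + 1 ∧ i ≠ j ∧ k i ≠ 0 ∧ k j ≠ 0) :
    let kq : ℕ → ℚ := fun i => (k i : ℚ)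
    let s1 : ℚ := esymm (2 * g + 1) 1 kq
    let s2 : ℚ := esymm (2 * g + 1) 2 kq
    let s3 : ℚ := esymm (2 * g + 1) 3 kq
    let a2 : ℚ := (1 / 2) * g * (g + 1) + g * s1 + s2
    let v3 : ℚ := (1 / 2) * (g * (g + 1) * (2 * g + 1) / 3 + g * (2 * g + 1) * s1
      + g * s1 ^ 2 + 2 * g * s2 + s1 * s2 + s3)
    let V : ℚ := g - 3 / 2
      + (1 / 2) * ∑ m ∈ Finset.range (2 * g + 1),
          2 ^ m * ((2 * g + 1 - m : ℕ) : ℚ) * esymm (2 * g + 1) m kq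
    v3 * (V + 2 * g - 1) > 7 * a2 ^ 2 := by
  intro kq s1 s2 s3 a2 v3 V
  obtain ⟨i, j, hi, hj, hij, hki, hkj⟩ := htwo
  have hkq : ∀ l, 0 ≤ kq l := fun l => Nat.cast_nonneg _
  have hkqi : (1 : ℚ) ≤ kq i := by
    show (1 : ℚ) ≤ ((k i : ℕ) : ℚ)
    exact_mod_cast Nat.one_le_iff_ne_zero.mpr hki
  have hkqj : (1 : ℚ) ≤ kq j := by
    show (1 : ℚ) ≤ ((k j : ℕ) : ℚ)
    exact_mod_cast Nat.one_le_iff_ne_zero.mpr hkj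
  set N := 2 * g + 1 with hN
  have hgq : (4 : ℚ) ≤ (g : ℚ) := by exact_mod_cast hg
  -- s1 ≥ 2
  have hs1 : (2 : ℚ) ≤ s1 := by
    have hsub : ({{i}, {j}} : Finset (Finset ℕ)) ⊆ (Finset.range N).powersetCard 1 := by
      intro t ht
      rcases Finset.mem_insert.mp ht with h | h
      · subst h
        rw [Finset.mem_powersetCard]
        exact ⟨Finset.singleton_subset_iff.mpr (Finset.mem_range.mpr hi), Finset.card_singleton _⟩
      · rw [Finset.mem_singleton] at h
        subst h
        rw [Finset.mem_powersetCard]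
        exact ⟨Finset.singleton_subset_iff.mpr (Finset.mem_range.mpr hj), Finset.card_singleton _⟩
    have hne : ({i} : Finset ℕ) ≠ {j} := by
      simp only [ne_eq, Finset.singleton_inj]
      exact hij
    have h1 : kq i + kq j = ∑ t ∈ ({{i}, {j}} : Finset (Finset ℕ)), ∏ l ∈ t, kq l := by
      rw [Finset.sum_pair hne]
      simp
    have h2 : ∑ t ∈ ({{i}, {j}} : Finset (Finset ℕ)), ∏ l ∈ t, kq l ≤ s1 :=
      Finset.sum_le_sum_of_subset_of_nonneg hsub
        (fun t _ _ => Finset.prod_nonneg fun l _ => hkq l)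
    linarith
  -- s2 ≥ 1
  have hs2 : (1 : ℚ) ≤ s2 := by
    have hmem : ({i, j} : Finset ℕ) ∈ (Finset.range N).powersetCard 2 := by
      rw [Finset.mem_powersetCard]
      constructor
      · intro l hl
        rcases Finset.mem_insert.mp hl with h | h
        · exact Finset.mem_range.mpr (h ▸ hi)
        · exact Finset.mem_range.mpr ((Finset.mem_singleton.mp h) ▸ hj)
      · rw [Finset.card_insert_of_notMem (by simpa using hij), Finset.card_singleton]
    have h1 : ∏ l ∈ ({i, j} : Finset ℕ), kq l ≤ s2 :=
      Finset.single_le_sum (f := fun t => ∏ l ∈ t, kq l)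
        (fun t _ => Finset.prod_nonneg fun l _ => hkq l) hmem
    rw [Finset.prod_pair hij] at h1
    nlinarith
  -- s3 ≥ 0
  have hs3 : (0 : ℚ) ≤ s3 := esymm_nonneg _ _ _ hkq
  -- bound the V sum below
  have hVsum : (2 * (g : ℚ) + 1) + 4 * g * s1 + 4 * (2 * g - 1) * s2
      ≤ ∑ m ∈ Finset.range N, 2 ^ m * ((N - m : ℕ) : ℚ) * esymm N m kq := by
    have hsub : ({0, 1, 2} : Finset ℕ) ⊆ Finset.range N := by
      intro m hm
      fin_cases hm <;> (rw [Finset.mem_range]; omega)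
    have hle : ∑ m ∈ ({0, 1, 2} : Finset ℕ), 2 ^ m * ((N - m : ℕ) : ℚ) * esymm N m kq
        ≤ ∑ m ∈ Finset.range N, 2 ^ m * ((N - m : ℕ) : ℚ) * esymm N m kq := by
      refine Finset.sum_le_sum_of_subset_of_nonneg hsub fun m _ _ => ?_
      have := esymm_nonneg N m kq hkq
      positivity
    have he0 : esymm N 0 kq = 1 := by simp [esymm]
    have hs1d : s1 = esymm N 1 kq := rfl
    have hs2d : s2 = esymm N 2 kq := rfl
    have hsum3 : ∑ m ∈ ({0, 1, 2} : Finset ℕ), 2 ^ m * ((N - m : ℕ) : ℚ) * esymm N m kq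
        = ((N : ℕ) : ℚ) + 2 * ((N - 1 : ℕ) : ℚ) * s1 + 4 * ((N - 2 : ℕ) : ℚ) * s2 := by
      rw [show ({0, 1, 2} : Finset ℕ) = insert 0 (insert 1 {2}) from rfl,
        Finset.sum_insert (by decide), Finset.sum_insert (by decide), Finset.sum_singleton,
        he0, hs1d, hs2d]
      simp only [Nat.sub_zero]
      ring
    have hc0 : ((N : ℕ) : ℚ) = 2 * (g : ℚ) + 1 := by rw [hN]; push_cast; ring
    have hc1 : ((N - 1 : ℕ) : ℚ) = 2 * (g : ℚ) := by
      have h : (N - 1 : ℕ) = 2 * g := by omega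
      rw [h]; push_cast; ring
    have hc2 : ((N - 2 : ℕ) : ℚ) = 2 * (g : ℚ) - 1 := by
      have h : (N - 2 : ℕ) + 1 = 2 * g := by omega
      have := congrArg (fun n : ℕ => (n : ℚ)) h
      push_cast at this
      linarith
    rw [hsum3, hc0, hc1, hc2] at hle
    linarith
  -- combine
  have hcore := pretzel_core (g : ℚ) s1 s2 (by linarith) (by linarith) (by linarith)
  have hVlb : 4 * (g : ℚ) - 2 + 2 * g * s1 + (4 * g - 2) * s2 ≤ V + 2 * g - 1 := by
    simp only [V]
    linarith
  have hVlbpos : (0 : ℚ) ≤ 4 * (g : ℚ) - 2 + 2 * g * s1 + (4 * g - 2) * s2 := by nlinarith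
  have hv3lb : ((1 / 2) * ((g : ℚ) * (g + 1) * (2 * g + 1) / 3 + g * (2 * g + 1) * s1
      + g * s1 ^ 2 + 2 * g * s2 + s1 * s2)) ≤ v3 := by
    simp only [v3]; linarith
  have hv3pos : (0 : ℚ) ≤ v3 := by
    simp only [v3]; nlinarith
  calc 7 * a2 ^ 2
      < ((1 / 2) * ((g : ℚ) * (g + 1) * (2 * g + 1) / 3 + g * (2 * g + 1) * s1
          + g * s1 ^ 2 + 2 * g * s2 + s1 * s2))
        * (4 * g - 2 + 2 * g * s1 + (4 * g - 2) * s2) := by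
        simp only [a2]
        nlinarith [hcore]
    _ ≤ v3 * (4 * g - 2 + 2 * g * s1 + (4 * g - 2) * s2) :=
        mul_le_mul_of_nonneg_right hv3lb hVlbpos
    _ ≤ v3 * (V + 2 * g - 1) := mul_le_mul_of_nonneg_left hVlb hv3pos
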